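/- For fixed m ≥ 2, the sequence f(m, n) = n! / ((n/m)!)^m · (1/m^n) is strictly decreasing in n along multiples of m; that is, f(m, n+m) < f(m, n) for all positive multiples n of m. -/
import Mathlib


/-- `f m n = n! / ((n/m)!)^m · (1/m^n)`. -/
noncomputable def fProb (m n : ℕ) : ℝ :=
  (Nat.factorial n : ℝ) / ((Nat.factorial (n / m) : ℝ) ^ m) * (1 / (m : ℝ) ^ n)

lemma factorial_add_prod (n m : ℕ) :
    Nat.factorial (n + m) = Nat.factorial n * ∏ i ∈ Finset.range m, (n + 1 + i) := by
  induction m with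
  | zero => simp
  | succ m ih =>
      rw [Finset.prod_range_succ, ← mul_assoc, ← ih, ← Nat.add_assoc, Nat.factorial_succ]
      ring

/-- For fixed `m ≥ 2`, `f(m, ·)` is strictly decreasing along positive multiples of `m`:
`f(m, n + m) < f(m, n)` whenever `n` is a positive multiple of `m`. -/
theorem fProb_strict_decreasing (m n : ℕ) (hm : 2 ≤ m) (hn : 0 < n) (hd : m ∣ n) :
    fProb m (n + m) < fProb m n := by
  obtain ⟨k, rfl⟩ := hd
  have hm0 : 0 < m := by omega
  have h1 : m * k / m = k := Nat.mul_div_cancel_left k hm0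
  have h2 : (m * k + m) / m = k + 1 := by
    have h : m * k + m = m * (k + 1) := by ring
    rw [h, Nat.mul_div_cancel_left _ hm0]
  -- key product inequality
  have hP : (∏ i ∈ Finset.range m, (m * k + 1 + i)) < (m * k + m) ^ m := by
    have hconst : (m * k + m) ^ m = ∏ _i ∈ Finset.range m, (m * k + m) := by
      simp
    rw [hconst]
    refine Finset.prod_lt_prod (fun i _ => by omega)
      (fun i hi => by simp only [Finset.mem_range] at hi; omega) ?_
    exact ⟨0, by simp [Finset.mem_range]; omega, by omega⟩
  -- key natural-number inequality
  have hA : Nat.factorial (m * k + m) * (Nat.factorial k ^ m * m ^ (m * k)) <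
      Nat.factorial (m * k) * (Nat.factorial (k + 1) ^ m * m ^ (m * k + m)) := by
    rw [factorial_add_prod]
    calc Nat.factorial (m * k) * (∏ i ∈ Finset.range m, (m * k + 1 + i)) *
          (Nat.factorial k ^ m * m ^ (m * k))
        < Nat.factorial (m * k) * ((m * k + m) ^ m) *
          (Nat.factorial k ^ m * m ^ (m * k)) := by
          apply Nat.mul_lt_mul_of_lt_of_le
          · exact Nat.mul_lt_mul_of_le_of_lt (le_refl _) hP (Nat.factorial_pos _)
          · exact le_refl _
          · positivity
      _ = Nat.factorial (m * k) * (Nat.factorial (k + 1) ^ m * m ^ (m * k + m)) := by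
          rw [Nat.factorial_succ, show m * k + m = m * (k + 1) by ring, mul_pow,
            mul_pow, show m * (k + 1) = m * k + m by ring, pow_add]
          ring
  unfold fProb
  rw [h1, h2]
  rw [div_mul_div_comm, div_mul_div_comm, mul_one, mul_one,
    div_lt_div_iff₀ (by positivity) (by positivity)]
  have hm0' : (0:ℝ) < m := by exact_mod_cast hm0
  exact_mod_cast hA
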